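/- Let ψ : M → R be Lipschitz on a compact manifold, c ∈ C^1(M×N) with N compact, and suppose that whenever ψ is differentiable at x and y ∈ ∂_c ψ(x) (meaning ψ(x) = φ(y) − c(x,y) where ψ is the c-transform as in the envelope formula), one has −∂c/∂x(x,y) = dψ(x), with ∂_c ψ(x) nonempty closed for each x and the graph of ∂_c ψ closed. Then: if ∂ψ(x) (the Clarke differential) is a singleton, ψ is differentiable at x; and if ψ is differentiable at x, then ∂ψ(x) is a singleton. In particular, for two sequences x_k → x, x'_k → x of differentiability points with dψ(x_k) → p and dψ(x'_k) → q, choosing y_k ∈ ∂_c ψ(x_k), y'_k ∈ ∂_c ψ(x'_k) with limits ȳ, ȳ' ∈ ∂_c ψ(x), one gets p = −∂c/∂x(x,ȳ) and q = −∂c/∂x(x,ȳ'), so p = q when ψ is differentiable at x. -/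

import Mathlib

open Filter Topology

/-- The Clarke generalized differential of `ψ` at `x`. -/
def ClarkeSubdiff {n : ℕ} (ψ : EuclideanSpace ℝ (Fin n) → ℝ) (x : EuclideanSpace ℝ (Fin n)) :
    Set (EuclideanSpace ℝ (Fin n) →L[ℝ] ℝ) :=
  convexHull ℝ {p | ∃ u : ℕ → EuclideanSpace ℝ (Fin n),
    (∀ k, DifferentiableAt ℝ ψ (u k)) ∧ Tendsto u atTop (nhds x) ∧
      Tendsto (fun k => fderiv ℝ ψ (u k)) atTop (nhds p)}

open MeasureTheory Metric Set

section aux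

variable {n : ℕ}

local notation "E" => EuclideanSpace ℝ (Fin n)

/-- In a T2 space, a cluster point of a filter converging to `p` equals `p`. -/
lemma clusterPt_eq_of_le_nhds {X : Type*} [TopologicalSpace X] [T2Space X] {y p : X}
    {l : Filter X} (h : ClusterPt y l) (hl : l ≤ nhds p) : y = p := by
  have h1 : (nhds y ⊓ nhds p).NeBot := h.neBot.mono (inf_le_inf_left _ hl)
  exact t2_iff_nhds.mp inferInstance h1

/-- a.e. differentiability (Rademacher) gives a differentiability point in every ball. -/
lemma exists_diff_in_ball {ψ : E → ℝ} {K : NNReal} (hψ : LipschitzWith K ψ)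
    (x : E) {δ : ℝ} (hδ : 0 < δ) : ∃ w ∈ ball x δ, DifferentiableAt ℝ ψ w := by
  have hae : ∀ᵐ w : E ∂volume, DifferentiableAt ℝ ψ w := hψ.ae_differentiableAt
  by_contra h
  push_neg at h
  have hsub : ball x δ ⊆ {w : E | ¬ DifferentiableAt ℝ ψ w} := fun w hw => h w hw
  have h0 : volume (ball x δ) = 0 :=
    le_antisymm (le_trans (measure_mono hsub) (le_of_eq (ae_iff.mp hae))) bot_le
  exact absurd h0 (ne_of_gt (measure_ball_pos volume x hδ))

lemma lip_translate {ψ : E → ℝ} {K : NNReal} (hψ : LipschitzWith K ψ) (a : E) :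
    LipschitzWith K (fun w => ψ (w + a)) := fun w1 w2 => by
  simpa [edist_add_right] using hψ (w1 + a) (w2 + a)

/-- Key analytic lemma: if all gradients of a Lipschitz function on a ball are (at
differentiability points) bounded by `ε`, then the function is `ε`-Lipschitz on the half
ball.  Proved by differentiating the average of `ψ` over small balls. -/
lemma lip_of_grad_le {ψ : E → ℝ} {K : NNReal} (hψ : LipschitzWith K ψ)
    {x : E} {ε δ : ℝ} (hε : 0 ≤ ε)
    (hgrad : ∀ w ∈ ball x δ, DifferentiableAt ℝ ψ w → ‖fderiv ℝ ψ w‖ ≤ ε)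
    {z z' : E} (hz : z ∈ ball x (δ/2)) (hz' : z' ∈ ball x (δ/2)) :
    |ψ z - ψ z'| ≤ ε * ‖z - z'‖ := by
  have hδ : 0 < δ := by
    have h0 := mem_ball.mp hz
    have h1 : (0:ℝ) ≤ dist z x := dist_nonneg
    linarith
  refine le_of_forall_pos_le_add (fun c hc => ?_)
  set r : ℝ := min (δ/4) (c / (2*K+1)) with hr_def
  have hK1 : (0:ℝ) < 2*K+1 := by positivity
  have hr : 0 < r := lt_min (by linarith) (by positivity)
  have hrδ : r ≤ δ/4 := min_le_left _ _
  have hrc : 2*K*r ≤ c := by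
    have h1 : r ≤ c / (2*K+1) := min_le_right _ _
    have h2 : 2*(K:ℝ)*r ≤ (2*K+1) * (c / (2*K+1)) := by
      have hK0 : (0:ℝ) ≤ 2*K := by positivity
      nlinarith [h1, hr.le]
    rwa [mul_div_cancel₀ _ (ne_of_gt hK1)] at h2
  set μ : Measure E := volume.restrict (ball (0:E) r) with hμ
  have hμfin : IsFiniteMeasure μ := by
    constructor
    rw [hμ, Measure.restrict_apply_univ]
    exact measure_ball_lt_top
  set vol : ℝ := (volume (ball (0:E) r)).toReal with hvol
  have hvol_pos : 0 < vol :=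
    ENNReal.toReal_pos (ne_of_gt (measure_ball_pos volume 0 hr)) (ne_of_lt measure_ball_lt_top)
  set G : E → ℝ := fun z => ∫ a in ball (0:E) r, ψ (z + a) with hG
  have hint : ∀ z₀ : E, Integrable (fun a => ψ (z₀ + a)) μ := by
    intro z₀
    have hcont : Continuous (fun a : E => ψ (z₀ + a)) :=
      hψ.continuous.comp (continuous_const.add continuous_id)
    have hco : IntegrableOn (fun a => ψ (z₀ + a)) (closedBall (0:E) r) volume :=
      hcont.continuousOn.integrableOn_compact (isCompact_closedBall _ _)
    exact hco.mono_set ball_subset_closedBall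
  set Φ : E → (E →L[ℝ] ℝ) := fun z₀ => ∫ a in ball (0:E) r, fderiv ℝ ψ (z₀ + a) with hΦ
  have hderiv : ∀ z₀ : E, HasFDerivAt G (Φ z₀) z₀ := by
    intro z₀
    have hmeas : ∀ᶠ w in nhds z₀, AEStronglyMeasurable (fun a => ψ (w + a)) μ :=
      Filter.Eventually.of_forall fun w =>
        (hψ.continuous.comp (continuous_const.add continuous_id)).aestronglyMeasurable
    have hF'_meas : AEStronglyMeasurable (fun a => fderiv ℝ ψ (z₀ + a)) μ :=
      ((measurable_fderiv ℝ ψ).comp (measurable_const_add z₀)).aestronglyMeasurable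
    have h_lip : ∀ᵐ a ∂μ, LipschitzOnWith (Real.nnabs ((K:ℝ)))
        (fun w => ψ (w + a)) (ball z₀ 1) := by
      refine Filter.Eventually.of_forall (fun a => ?_)
      rw [Real.nnabs_coe]
      exact (lip_translate hψ a).lipschitzOnWith
    have h_diff : ∀ᵐ a ∂μ, HasFDerivAt (fun w => ψ (w + a)) (fderiv ℝ ψ (z₀ + a)) z₀ := by
      have hae : ∀ᵐ w : E ∂volume, DifferentiableAt ℝ ψ w := hψ.ae_differentiableAt
      have htrans : ∀ᵐ a : E ∂volume, DifferentiableAt ℝ ψ (z₀ + a) := by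
        rw [ae_iff] at hae ⊢
        have : {a : E | ¬ DifferentiableAt ℝ ψ (z₀ + a)} =
            (fun a => z₀ + a) ⁻¹' {w : E | ¬ DifferentiableAt ℝ ψ w} := rfl
        rw [this, measure_preimage_add]
        exact hae
      refine (ae_restrict_of_ae htrans).mono (fun a ha => ?_)
      have h1 := (ha.hasFDerivAt).comp z₀ ((hasFDerivAt_id z₀).add_const a)
      exact h1
    exact (hasFDerivAt_integral_of_dominated_loc_of_lip (ball_mem_nhds z₀ one_pos) hmeas (hint z₀) hF'_meas
      h_lip (integrable_const _) h_diff).2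
  have hΦbound : ∀ z₀ ∈ ball x (δ/2), ‖Φ z₀‖ ≤ ε * vol := by
    intro z₀ hz₀
    refine norm_setIntegral_le_of_norm_le_const_ae' measure_ball_lt_top ?_
    refine Filter.Eventually.of_forall (fun a ha => ?_)
    have haball : z₀ + a ∈ ball x δ := by
      rw [mem_ball] at hz₀ ha ⊢
      have h1 : dist (z₀ + a) z₀ = ‖a‖ := by
        rw [dist_eq_norm]; simp
      have h2 : ‖a‖ < r := by simpa [dist_eq_norm] using ha
      calc dist (z₀ + a) x ≤ dist (z₀ + a) z₀ + dist z₀ x := dist_triangle _ _ _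
        _ < r + δ/2 := by rw [h1]; exact add_lt_add h2 hz₀
        _ ≤ δ := by linarith
    by_cases hd : DifferentiableAt ℝ ψ (z₀ + a)
    · exact hgrad _ haball hd
    · rw [fderiv_zero_of_not_differentiableAt hd]
      simpa using hε
  have hG_lip : ‖G z - G z'‖ ≤ (ε * vol) * ‖z - z'‖ := by
    refine Convex.norm_image_sub_le_of_norm_hasFDerivWithin_le
      (fun w hw => (hderiv w).hasFDerivWithinAt) hΦbound (convex_ball x (δ/2)) hz' hz
  have hGclose : ∀ w : E, |G w - vol * ψ w| ≤ K * r * vol := by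
    intro w
    have heq : G w - vol * ψ w = ∫ a in ball (0:E) r, (ψ (w + a) - ψ w) := by
      rw [integral_sub (hint w) (integrable_const _), setIntegral_const]
      simp [hG, hvol, smul_eq_mul]
      rfl
    rw [heq]
    have hb : ∀ a ∈ ball (0:E) r, ‖ψ (w + a) - ψ w‖ ≤ (K:ℝ) * r := by
      intro a ha
      have h2 : ‖a‖ ≤ r := by
        rw [mem_ball, dist_eq_norm] at ha; simpa using ha.le
      have h3 : |ψ (w + a) - ψ w| ≤ K * ‖a‖ := by
        have h4 := hψ.dist_le_mul (w + a) w
        rw [Real.dist_eq] at h4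
        simpa [dist_eq_norm] using h4
      calc ‖ψ (w + a) - ψ w‖ = |ψ (w + a) - ψ w| := rfl
        _ ≤ K * ‖a‖ := h3
        _ ≤ K * r := by nlinarith [norm_nonneg a, NNReal.coe_nonneg K]
    have hn := norm_setIntegral_le_of_norm_le_const (μ := volume) (s := ball (0:E) r)
      measure_ball_lt_top hb
    rw [Real.norm_eq_abs] at hn
    exact hn
  have key : vol * |ψ z - ψ z'| ≤ vol * (ε * ‖z - z'‖) + 2 * K * r * vol := by
    have h1 := hGclose z
    have h2 := hGclose z'
    have h4 : |vol * ψ z - vol * ψ z'| ≤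
        |vol * ψ z - G z| + |G z - G z'| + |G z' - vol * ψ z'| := by
      calc |vol * ψ z - vol * ψ z'|
          = |(vol * ψ z - G z) + (G z - G z') + (G z' - vol * ψ z')| := by ring_nf
        _ ≤ _ := by
            exact (abs_add_le _ _).trans (add_le_add_left (abs_add_le _ _) _)
    have h5 : vol * |ψ z - ψ z'| = |vol * ψ z - vol * ψ z'| := by
      rw [← mul_sub, abs_mul, abs_of_pos hvol_pos]
    rw [h5]
    have h6 : |vol * ψ z - G z| = |G z - vol * ψ z| := abs_sub_comm _ _
    have h8 : |vol * ψ z - G z| ≤ K * r * vol := by rw [h6]; exact h1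
    rw [Real.norm_eq_abs] at hG_lip
    have h9 : ε * vol * ‖z - z'‖ = vol * (ε * ‖z - z'‖) := by ring
    have h10 : (2:ℝ) * K * r * vol = K * r * vol + K * r * vol := by ring
    linarith [h4, h8, h2, hG_lip]
  have hfin : |ψ z - ψ z'| ≤ ε * ‖z - z'‖ + 2 * K * r := by
    have := (mul_le_mul_iff_right₀ hvol_pos).mp (by
      calc vol * |ψ z - ψ z'| ≤ vol * (ε * ‖z - z'‖) + 2 * K * r * vol := key
        _ = vol * (ε * ‖z - z'‖ + 2 * K * r) := by ring)
    exact this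
  linarith

lemma tendsto_of_balls {w : ℕ → E} {x : E}
    (hw : ∀ k : ℕ, w k ∈ ball x (1/(k+1))) : Tendsto w atTop (nhds x) := by
  rw [tendsto_iff_dist_tendsto_zero]
  refine squeeze_zero (fun k => dist_nonneg) (fun k => (mem_ball.mp (hw k)).le) ?_
  exact tendsto_one_div_add_atTop_nhds_zero_nat

lemma bw_grad {ψ : E → ℝ} {K : NNReal} (hψ : LipschitzWith K ψ) (w : ℕ → E) :
    ∃ p : E →L[ℝ] ℝ, ∃ φ : ℕ → ℕ, StrictMono φ ∧
      Tendsto (fun k => fderiv ℝ ψ (w (φ k))) atTop (nhds p) := by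
  have hb : ∀ k, fderiv ℝ ψ (w k) ∈ closedBall (0 : E →L[ℝ] ℝ) K := fun k =>
    mem_closedBall_zero_iff.2 (norm_fderiv_le_of_lipschitz ℝ hψ)
  obtain ⟨p, -, φ, hφ, hp⟩ :=
    tendsto_subseq_of_bounded (isBounded_closedBall (x := (0 : E →L[ℝ] ℝ)) (r := K)) hb
  exact ⟨p, φ, hφ, hp⟩

lemma grad_close {ψ : E → ℝ} {K : NNReal} (hψ : LipschitzWith K ψ) {x : E} {p : E →L[ℝ] ℝ}
    (hsub : (ClarkeSubdiff ψ x).Subsingleton) (hp : p ∈ ClarkeSubdiff ψ x) {ε : ℝ} (hε : 0 < ε) :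
    ∃ δ > 0, ∀ w ∈ ball x δ, DifferentiableAt ℝ ψ w → ‖fderiv ℝ ψ w - p‖ ≤ ε := by
  by_contra h
  push_neg at h
  have h' : ∀ k : ℕ, ∃ w ∈ ball x (1/(k+1)),
      DifferentiableAt ℝ ψ w ∧ ε < ‖fderiv ℝ ψ w - p‖ := by
    intro k
    obtain ⟨w, hw1, hw2, hw3⟩ := h (1/(k+1)) (by positivity)
    exact ⟨w, hw1, hw2, hw3⟩
  choose w hwball hwd hwe using h'
  have hwx : Tendsto w atTop (nhds x) := tendsto_of_balls hwball
  obtain ⟨q, φ, hφ, hq⟩ := bw_grad hψ w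
  have hq_mem : q ∈ ClarkeSubdiff ψ x :=
    subset_convexHull ℝ _ ⟨w ∘ φ, fun k => hwd _, hwx.comp hφ.tendsto_atTop, hq⟩
  have hpq : p = q := hsub hp hq_mem
  have hcont : Tendsto (fun k => ‖fderiv ℝ ψ (w (φ k)) - p‖) atTop (nhds ‖q - p‖) :=
    (hq.sub tendsto_const_nhds).norm
  rw [← hpq, sub_self, norm_zero] at hcont
  have hle : ε ≤ 0 :=
    ge_of_tendsto hcont (Filter.Eventually.of_forall (fun k => (hwe (φ k)).le))
  linarith

lemma diff_of_subsingleton {ψ : E → ℝ} {K : NNReal} (hψ : LipschitzWith K ψ) (x : E)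
    (hsub : (ClarkeSubdiff ψ x).Subsingleton) : DifferentiableAt ℝ ψ x := by
  have h' : ∀ k : ℕ, ∃ w ∈ ball x (1/(k+1)), DifferentiableAt ℝ ψ w :=
    fun k => exists_diff_in_ball hψ x (by positivity)
  choose w hwball hwd using h'
  have hwx : Tendsto w atTop (nhds x) := tendsto_of_balls hwball
  obtain ⟨p, φ, hφ, hp⟩ := bw_grad hψ w
  have hpC : p ∈ ClarkeSubdiff ψ x :=
    subset_convexHull ℝ _ ⟨w ∘ φ, fun k => hwd _, hwx.comp hφ.tendsto_atTop, hp⟩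
  suffices h : HasFDerivAt ψ p x from h.differentiableAt
  rw [hasFDerivAt_iff_isLittleO_nhds_zero, Asymptotics.isLittleO_iff]
  intro ε hε
  obtain ⟨δ, hδ, hclose⟩ := grad_close hψ hsub hpC hε
  set g : E → ℝ := fun z => ψ z - p z with hg
  have hgl : LipschitzWith (K + ‖p‖₊) g := by
    have := hψ.sub p.lipschitz
    exact this
  have hgψ : ∀ v : E, DifferentiableAt ℝ g v → DifferentiableAt ℝ ψ v := by
    intro v hv
    have h1 : DifferentiableAt ℝ (fun z => g z + p z) v :=
      hv.add (p.differentiable.differentiableAt)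
    have h2 : (fun z => g z + p z) = ψ := by funext z; simp [hg]
    rwa [h2] at h1
  have hgrad : ∀ v ∈ ball x δ, DifferentiableAt ℝ g v → ‖fderiv ℝ g v‖ ≤ ε := by
    intro v hv hgd
    have hψd : DifferentiableAt ℝ ψ v := hgψ v hgd
    have h1 : fderiv ℝ g v = fderiv ℝ ψ v - p := by
      rw [hg]
      rw [fderiv_fun_sub hψd (p.differentiable.differentiableAt)]
      simp [ContinuousLinearMap.fderiv]
    rw [h1]
    exact hclose v hv hψd
  have hball : ball (0:E) (δ/2) ∈ nhds (0:E) := ball_mem_nhds 0 (by linarith)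
  filter_upwards [hball] with h hh
  have hz : x + h ∈ ball x (δ/2) := by
    rw [mem_ball] at hh ⊢
    simpa [dist_eq_norm] using hh
  have hx0 : x ∈ ball x (δ/2) := mem_ball_self (by linarith)
  have hkey := lip_of_grad_le hgl hε.le hgrad hz hx0
  have heq : g (x + h) - g x = ψ (x + h) - ψ x - p h := by
    simp [hg, map_add]
    ring
  rw [heq] at hkey
  have hnorm : ‖x + h - x‖ = ‖h‖ := by simp
  rw [hnorm] at hkey
  calc ‖ψ (x + h) - ψ x - p h‖ = |ψ (x + h) - ψ x - p h| := rfl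
    _ ≤ ε * ‖h‖ := hkey

end aux

theorem stmt7 {n : ℕ} {N : Type*} [TopologicalSpace N] [CompactSpace N]
    (ψ : EuclideanSpace ℝ (Fin n) → ℝ) (K : NNReal) (hψ : LipschitzWith K ψ)
    (c : EuclideanSpace ℝ (Fin n) → N → ℝ)
    (hcx : ∀ y : N, Differentiable ℝ fun x => c x y)
    (hcont : Continuous fun p : EuclideanSpace ℝ (Fin n) × N =>
      fderiv ℝ (fun x => c x p.2) p.1)
    (S : EuclideanSpace ℝ (Fin n) → Set N)
    (hSne : ∀ x, (S x).Nonempty)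
    (hSclosed : IsClosed {p : EuclideanSpace ℝ (Fin n) × N | p.2 ∈ S p.1})
    (henv : ∀ x y, DifferentiableAt ℝ ψ x → y ∈ S x →
      fderiv ℝ ψ x = - fderiv ℝ (fun x' => c x' y) x) :
    ∀ x, DifferentiableAt ℝ ψ x ↔ (ClarkeSubdiff ψ x).Subsingleton := by
  intro x
  constructor
  · intro hdiff
    have hbase : {p : EuclideanSpace ℝ (Fin n) →L[ℝ] ℝ |
        ∃ u : ℕ → EuclideanSpace ℝ (Fin n),
          (∀ k, DifferentiableAt ℝ ψ (u k)) ∧ Tendsto u atTop (nhds x) ∧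
            Tendsto (fun k => fderiv ℝ ψ (u k)) atTop (nhds p)} ⊆ {fderiv ℝ ψ x} := by
      rintro p ⟨u, hud, hux, hup⟩
      simp only [Set.mem_singleton_iff]
      set y : ℕ → N := fun k => (hSne (u k)).some with hy
      have hyS : ∀ k, y k ∈ S (u k) := fun k => (hSne (u k)).some_mem
      set q : ℕ → (EuclideanSpace ℝ (Fin n)) × N := fun k => (u k, y k) with hqdef
      have hcomp : IsCompact ((Metric.closedBall x 1) ×ˢ (Set.univ : Set N)) :=
        (isCompact_closedBall x 1).prod isCompact_univ
      have hle : Filter.map q atTop ≤ Filter.principal ((Metric.closedBall x 1) ×ˢ Set.univ) := by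
        rw [Filter.le_principal_iff, Filter.mem_map]
      -- {k | q k ∈ s}
        have hev : ∀ᶠ k in atTop, u k ∈ Metric.closedBall x 1 :=
          hux.eventually (Metric.closedBall_mem_nhds x one_pos)
        exact hev.mono (fun k hk => Set.mk_mem_prod hk (Set.mem_univ _))
      obtain ⟨z, -, hcl⟩ := hcomp.exists_clusterPt hle
      obtain ⟨xb, yb⟩ := z
      -- first coordinate cluster: xb = x
      have hfst : ClusterPt xb (Filter.map u atTop) := by
        have h1 : ClusterPt (Prod.fst (xb, yb)) (Filter.map Prod.fst (Filter.map q atTop)) :=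
          hcl.map continuousAt_fst Filter.tendsto_map
        rw [Filter.map_map] at h1
        exact h1
      have hxb : xb = x := clusterPt_eq_of_le_nhds hfst hux
      -- second: yb ∈ S xb
      have hmem : (xb, yb) ∈ {p : (EuclideanSpace ℝ (Fin n)) × N | p.2 ∈ S p.1} := by
        rw [← hSclosed.closure_eq]
        refine mem_closure_iff_clusterPt.2 (hcl.mono (Filter.le_principal_iff.2 ?_))
        rw [Filter.mem_map]
        exact Filter.Eventually.of_forall (fun k => hyS k)
      have hybS : yb ∈ S x := by rwa [hxb] at hmem
      -- limit of gradients
      set g : (EuclideanSpace ℝ (Fin n)) × N → (EuclideanSpace ℝ (Fin n) →L[ℝ] ℝ) :=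
        fun pr => -(fderiv ℝ (fun x' => c x' pr.2) pr.1) with hgdef
      have hgc : ContinuousAt g (xb, yb) := (hcont.neg).continuousAt
      have hmapeq : Filter.map g (Filter.map q atTop) =
          Filter.map (fun k => fderiv ℝ ψ (u k)) atTop := by
        rw [Filter.map_map]
        congr 1
        funext k
        exact (henv (u k) (y k) (hud k) (hyS k)).symm
      have hclg : ClusterPt (g (xb, yb)) (Filter.map (fun k => fderiv ℝ ψ (u k)) atTop) := by
        have h2 := hcl.map hgc Filter.tendsto_map
        rwa [hmapeq] at h2
      have hgp : g (xb, yb) = p := clusterPt_eq_of_le_nhds hclg hup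
      rw [henv x yb hdiff hybS]
      rw [← hgp, hgdef, hxb]
    intro a ha b hb
    have hsub : ClarkeSubdiff ψ x ⊆ {fderiv ℝ ψ x} := by
      have h1 := convexHull_mono hbase (𝕜 := ℝ)
      rwa [convexHull_singleton] at h1
    rw [hsub ha, hsub hb]
  · exact fun hsub => diff_of_subsingleton hψ x hsub
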